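/- If X* has the p-Dunford-Pettis relatively compact property and Y has the Schur property, then L(X,Y), the space of all bounded linear operators from X to Y with the operator norm, has the p-Dunford-Pettis relatively compact property. -/
import Mathlib


open Filter Topology Set
open scoped ENNReal

noncomputable section

/-- A sequence in a normed space is weakly null. -/
def WeaklyNull {E : Type*} [NormedAddCommGroup E] [NormedSpace ℝ E] (x : ℕ → E) : Prop :=
  ∀ φ : E →L[ℝ] ℝ, Tendsto (fun n => φ (x n)) atTop (𝓝 0)

/-- A bounded set on which every weakly null sequence of functionals converges uniformly. -/
def DunfordPettisSet {E : Type*} [NormedAddCommGroup E] [NormedSpace ℝ E] (K : Set E) : Prop :=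
  Bornology.IsBounded K ∧ ∀ f : ℕ → (E →L[ℝ] ℝ), WeaklyNull f →
    ∀ ε > 0, ∃ N : ℕ, ∀ n ≥ N, ∀ x ∈ K, |f n x| < ε

/-- Weakly `p`-summable sequence; for `p = ∞` this means weakly null. -/
def WeaklyPSummable (p : ℝ≥0∞) {E : Type*} [NormedAddCommGroup E] [NormedSpace ℝ E]
    (x : ℕ → E) : Prop :=
  if p = ∞ then WeaklyNull x else ∀ φ : E →L[ℝ] ℝ, Memℓp (fun n => φ (x n)) p

def NormNull {E : Type*} [NormedAddCommGroup E] (x : ℕ → E) : Prop :=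
  Tendsto (fun n => ‖x n‖) atTop (𝓝 0)

def PRightNull (p : ℝ≥0∞) {E : Type*} [NormedAddCommGroup E] [NormedSpace ℝ E]
    (x : ℕ → E) : Prop :=
  WeaklyPSummable p x ∧ DunfordPettisSet (Set.range x)

def WeaklyPCauchy (p : ℝ≥0∞) {E : Type*} [NormedAddCommGroup E] [NormedSpace ℝ E]
    (x : ℕ → E) : Prop :=
  ∀ k l : ℕ → ℕ, StrictMono k → StrictMono l →
    WeaklyPSummable p (fun n => x (k n) - x (l n))

def PRightCauchy (p : ℝ≥0∞) {E : Type*} [NormedAddCommGroup E] [NormedSpace ℝ E]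
    (x : ℕ → E) : Prop :=
  WeaklyPCauchy p x ∧ DunfordPettisSet (Set.range x)

/-- `p`-Dunford-Pettis relatively compact property. -/
def HasDPrcP (p : ℝ≥0∞) (E : Type*) [NormedAddCommGroup E] [NormedSpace ℝ E] : Prop :=
  ∀ x : ℕ → E, PRightNull p x → NormNull x

/-- A (not necessarily linear) map is Dunford-Pettis `p`-convergent. -/
def DPpConvergent (p : ℝ≥0∞) {E F : Type*} [NormedAddCommGroup E] [NormedSpace ℝ E]
    [NormedAddCommGroup F] (f : E → F) : Prop :=
  ∀ x : ℕ → E, PRightNull p x → NormNull (fun n => f (x n))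

/-- A map is `p`-convergent. -/
def PConvergent (p : ℝ≥0∞) {E F : Type*} [NormedAddCommGroup E] [NormedSpace ℝ E]
    [NormedAddCommGroup F] (f : E → F) : Prop :=
  ∀ x : ℕ → E, WeaklyPSummable p x → NormNull (fun n => f (x n))

/-- The adjoint of a continuous linear operator between normed spaces. -/
def opAdjoint {E F : Type*} [NormedAddCommGroup E] [NormedSpace ℝ E]
    [NormedAddCommGroup F] [NormedSpace ℝ F] (T : E →L[ℝ] F) :
    (F →L[ℝ] ℝ) →L[ℝ] (E →L[ℝ] ℝ) :=
  (ContinuousLinearMap.compL ℝ E F ℝ).flip T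


/-- The Schur property: every weakly null sequence is norm null. -/
def SchurProperty (E : Type*) [NormedAddCommGroup E] [NormedSpace ℝ E] : Prop :=
  ∀ x : ℕ → E, WeaklyNull x → NormNull x

/-- A continuous linear image of a weakly p-summable sequence is weakly p-summable. -/
lemma map_weaklyPSummable {E F : Type*} [NormedAddCommGroup E] [NormedSpace ℝ E]
    [NormedAddCommGroup F] [NormedSpace ℝ F] (u : E →L[ℝ] F) {p : ℝ≥0∞} {x : ℕ → E}
    (hx : WeaklyPSummable p x) : WeaklyPSummable p (fun n => u (x n)) := by
  unfold WeaklyPSummable at hx ⊢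
  split_ifs with h
  · rw [if_pos h] at hx
    intro φ
    exact hx (φ.comp u)
  · rw [if_neg h] at hx
    intro φ
    exact hx (φ.comp u)

/-- A continuous linear image of a Dunford–Pettis range is Dunford–Pettis. -/
lemma map_dunfordPettis {E F : Type*} [NormedAddCommGroup E] [NormedSpace ℝ E]
    [NormedAddCommGroup F] [NormedSpace ℝ F] (u : E →L[ℝ] F) {x : ℕ → E}
    (hx : DunfordPettisSet (Set.range x)) :
    DunfordPettisSet (Set.range (fun n => u (x n))) := by
  obtain ⟨hb, hdp⟩ := hx
  constructor
  · have : Set.range (fun n => u (x n)) ⊆ u '' Set.range x := by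
      rintro _ ⟨n, rfl⟩; exact ⟨x n, ⟨n, rfl⟩, rfl⟩
    exact (u.lipschitz.isBounded_image hb).subset this
  · intro f hf ε hε
    -- pull back the functionals along u
    have hWN : WeaklyNull (fun k => (f k).comp u) := by
      intro Ξ
      have := hf (Ξ.comp (opAdjoint u))
      simpa [opAdjoint] using this
    obtain ⟨N, hN⟩ := hdp (fun k => (f k).comp u) hWN ε hε
    refine ⟨N, fun n hn y hy => ?_⟩
    obtain ⟨m, rfl⟩ := hy
    exact hN n hn (x m) ⟨m, rfl⟩

lemma map_pRightNull {E F : Type*} [NormedAddCommGroup E] [NormedSpace ℝ E]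
    [NormedAddCommGroup F] [NormedSpace ℝ F] (u : E →L[ℝ] F) {p : ℝ≥0∞} {x : ℕ → E}
    (hx : PRightNull p x) : PRightNull p (fun n => u (x n)) :=
  ⟨map_weaklyPSummable u hx.1, map_dunfordPettis u hx.2⟩

theorem stmt14 {X Y : Type*} [NormedAddCommGroup X] [NormedSpace ℝ X] [CompleteSpace X]
    [NormedAddCommGroup Y] [NormedSpace ℝ Y] [CompleteSpace Y]
    (p : ℝ≥0∞) (hp : 1 ≤ p)
    (hX : HasDPrcP p (X →L[ℝ] ℝ)) (hY : SchurProperty Y) :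
    HasDPrcP p (X →L[ℝ] Y) := by
  intro T hT
  -- Step 1: for any y* ∈ Y*, the sequence of adjoints applied to y* is norm null in X*.
  have key : ∀ φ : Y →L[ℝ] ℝ, NormNull (fun n => φ.comp (T n)) := by
    intro φ
    have := map_pRightNull (ContinuousLinearMap.compL ℝ X Y ℝ φ) hT
    exact hX _ this
  -- Step 2: choose near-norming vectors
  have hsel : ∀ n : ℕ, ∃ x : X, ‖x‖ ≤ 1 ∧ ‖T n‖ ≤ ‖T n x‖ + 1 / (n + 1) := by
    intro n
    have hpos : (0:ℝ) < 1 / (n + 1) := by positivity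
    have hlt : ‖T n‖ - 1 / (n + 1) < ‖T n‖ := by linarith
    obtain ⟨x, hx1, hx2⟩ := (T n).exists_lt_apply_of_lt_opNorm hlt
    exact ⟨x, hx1.le, by linarith⟩
  choose x hx1 hx2 using hsel
  -- Step 3: the sequence (T n (x n)) is weakly null in Y.
  have hwn : WeaklyNull (fun n => T n (x n)) := by
    intro φ
    have hb : ∀ n, ‖φ (T n (x n))‖ ≤ ‖φ.comp (T n)‖ := by
      intro n
      calc ‖φ (T n (x n))‖ = ‖(φ.comp (T n)) (x n)‖ := rfl
        _ ≤ ‖φ.comp (T n)‖ * ‖x n‖ := (φ.comp (T n)).le_opNorm _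
        _ ≤ ‖φ.comp (T n)‖ * 1 := by
            exact mul_le_mul_of_nonneg_left (hx1 n) (norm_nonneg _)
        _ = ‖φ.comp (T n)‖ := mul_one _
    exact squeeze_zero_norm hb (key φ)
  -- Step 4: Schur gives norm nullity, then squeeze the operator norms.
  have hnn : NormNull (fun n => T n (x n)) := hY _ hwn
  have h1 : Tendsto (fun n : ℕ => ‖T n (x n)‖ + 1 / (n + 1)) atTop (𝓝 0) := by
    have := hnn.add tendsto_one_div_add_atTop_nhds_zero_nat
    simpa using this
  exact squeeze_zero (fun n => norm_nonneg _) hx2 h1
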